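/- If g : [0,1] → ℝ is concave with g(0)=0 and η(x) = −x log x, and limsup_{x→0⁺} g(x)/η(x) = ∞, then limsup_{n→∞} (1/n) · 2ⁿ g(2^{-n}) = ∞. -/

import Mathlib

/-- The Shannon entropy function. -/
noncomputable def eta (x : ℝ) : ℝ := -x * Real.log x

theorem limsup_top_of_ratio_top (g : ℝ → ℝ)
    (hconc : ConcaveOn ℝ (Set.Icc 0 1) g) (h0 : g 0 = 0)
    (hlim : Filter.Tendsto g (nhdsWithin 0 (Set.Ioi 0)) (nhds 0))
    (hC : Filter.limsup (fun x : ℝ => ((g x / eta x : ℝ) : EReal))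
        (nhdsWithin 0 (Set.Ioo 0 1)) = ⊤) :
    Filter.limsup
        (fun n : ℕ => (((1/(n:ℝ)) * ((2:ℝ)^n * g (((2:ℝ)^n)⁻¹)) : ℝ) : EReal))
        Filter.atTop = ⊤ := by
  rw [EReal.eq_top_iff_forall_lt]
  intro y
  have hlog2 : (0:ℝ) < Real.log 2 := Real.log_pos (by norm_num)
  set M : ℝ := (2 * (|y| + 1)) / Real.log 2 with hM
  have hMpos : 0 < M := by positivity
  have hyc : (y : EReal) < ((M * Real.log 2 / 2 : ℝ) : EReal) := by
    rw [EReal.coe_lt_coe_iff, hM]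
    have : (2 * (|y| + 1)) / Real.log 2 * Real.log 2 / 2 = |y| + 1 := by
      field_simp
    rw [this]
    exact lt_of_le_of_lt (le_abs_self y) (by linarith)
  refine lt_of_lt_of_le hyc ?_
  apply Filter.le_limsup_of_frequently_le (hu_le := Filter.isBoundedUnder_of ⟨⊤, fun _ => le_top⟩)
  rw [Filter.frequently_atTop]
  intro N
  -- find x arbitrarily small with M < g x / eta x
  have hfreq : ∃ᶠ x in nhdsWithin 0 (Set.Ioo 0 1),
      (M : EReal) < ((g x / eta x : ℝ) : EReal) := by
    apply Filter.frequently_lt_of_lt_limsup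
    · isBoundedDefault
    · rw [hC]; exact EReal.coe_lt_top M
  set N' : ℕ := max N 1 with hN'
  have hεpos : (0:ℝ) < ((2:ℝ)^N')⁻¹ := by positivity
  have hev : ∀ᶠ x in nhdsWithin 0 (Set.Ioo 0 1),
      x < ((2:ℝ)^N')⁻¹ ∧ x ∈ Set.Ioo (0:ℝ) 1 := by
    refine Filter.Eventually.and ?_ self_mem_nhdsWithin
    exact nhdsWithin_le_nhds (gt_mem_nhds hεpos)
  obtain ⟨x, hMx, hxε, hx0, hx1⟩ := (hfreq.and_eventually hev).exists
  rw [EReal.coe_lt_coe_iff] at hMx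
  have hetax : 0 < eta x := by
    have hlx : Real.log x < 0 := Real.log_neg hx0 hx1
    have : eta x = x * (-Real.log x) := by rw [eta]; ring
    rw [this]; exact mul_pos hx0 (by linarith)
  have hgx : M * eta x < g x := (lt_div_iff₀ hetax).mp hMx
  -- choose n with 2^n ≤ x⁻¹ < 2^(n+1)
  set l : ℝ := Real.logb 2 x⁻¹ with hl
  set n : ℕ := ⌊l⌋₊ with hn
  have hxinv : (2:ℝ)^N' < x⁻¹ := by
    rw [← inv_inv ((2:ℝ)^N')]
    exact inv_strictAnti₀ hx0 hxε
  have hxinvpos : (0:ℝ) < x⁻¹ := by positivity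
  have hlN : (N' : ℝ) ≤ l := by
    have h1 : Real.logb 2 ((2:ℝ)^N') ≤ l :=
      Real.logb_le_logb_of_le (by norm_num) (by positivity) hxinv.le
    rwa [Real.logb_pow, Real.logb_self_eq_one (by norm_num), mul_one] at h1 <;> try norm_num
  have hnN : N' ≤ n := Nat.le_floor hlN
  have hn1 : 1 ≤ n := le_trans (le_max_right N 1) hnN
  have hpow_le : (2:ℝ)^n ≤ x⁻¹ := by
    have : (2:ℝ)^(n:ℝ) ≤ (2:ℝ)^l :=
      Real.rpow_le_rpow_left_iff (by norm_num : (1:ℝ) < 2) |>.mpr (Nat.floor_le (le_trans (by positivity) hlN))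
    rwa [Real.rpow_natCast, Real.rpow_logb (by norm_num) (by norm_num) hxinvpos] at this
  have hlt_pow : x⁻¹ < (2:ℝ)^(n+1) := by
    have h2 : l < ((n+1 : ℕ) : ℝ) := by
      push_cast; exact Nat.lt_floor_add_one l
    have : (2:ℝ)^l < (2:ℝ)^(((n+1:ℕ)):ℝ) :=
      Real.rpow_lt_rpow_left_iff (by norm_num : (1:ℝ) < 2) |>.mpr h2
    rwa [Real.rpow_natCast, Real.rpow_logb (by norm_num) (by norm_num) hxinvpos] at this
  set a : ℝ := ((2:ℝ)^(n+1))⁻¹ with ha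
  have hapos : 0 < a := by positivity
  have hax : a < x := by
    rw [ha, ← inv_inv x]
    exact inv_strictAnti₀ hxinvpos hlt_pow
  -- concavity slope: g a ≥ (a/x) * g x
  have hslope : (a / x) * g x ≤ g a := by
    have hxmem : x ∈ Set.Icc (0:ℝ) 1 := ⟨hx0.le, hx1.le⟩
    have h0mem : (0:ℝ) ∈ Set.Icc (0:ℝ) 1 := ⟨le_refl 0, by norm_num⟩
    have hw1 : (0:ℝ) ≤ a / x := by positivity
    have hw2 : (0:ℝ) ≤ 1 - a / x := by
      have : a / x < 1 := (div_lt_one hx0).mpr hax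
      linarith
    have key := hconc.2 hxmem h0mem hw1 hw2 (by ring)
    simp only [smul_eq_mul, mul_zero, add_zero, h0] at key
    have hxx : a / x * x = a := div_mul_cancel₀ a hx0.ne'
    rwa [hxx] at key
  -- -log x ≥ n log 2
  have hlogx : (n : ℝ) * Real.log 2 ≤ -Real.log x := by
    have h1 : Real.log ((2:ℝ)^n) ≤ Real.log x⁻¹ :=
      Real.log_le_log (by positivity) hpow_le
    rwa [Real.log_pow, Real.log_inv] at h1
  -- chain of inequalities
  have hga : a * (M * ((n:ℝ) * Real.log 2)) ≤ g a := by
    have h1 : a * (M * ((n:ℝ) * Real.log 2)) ≤ a * (M * (-Real.log x)) := by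
      apply mul_le_mul_of_nonneg_left _ hapos.le
      exact mul_le_mul_of_nonneg_left hlogx hMpos.le
    have h2 : a * (M * (-Real.log x)) = (a / x) * (M * eta x) := by
      rw [eta]; field_simp
    have h3 : (a / x) * (M * eta x) ≤ (a / x) * g x := by
      apply mul_le_mul_of_nonneg_left hgx.le (by positivity)
    linarith
  refine ⟨n + 1, ?_, ?_⟩
  · calc N ≤ N' := le_max_left N 1
      _ ≤ n := hnN
      _ ≤ n + 1 := Nat.le_succ n
  rw [EReal.coe_le_coe_iff]
  have hpow : ((2:ℝ)^(n+1))⁻¹ = a := rfl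
  push_cast
  have h2pos : (0:ℝ) < (2:ℝ)^(n+1) := by positivity
  have hfinal : M * Real.log 2 / 2 ≤ (1/((n:ℝ)+1)) * ((2:ℝ)^(n+1) * g a) := by
    have hga' : (2:ℝ)^(n+1) * g a ≥ M * ((n:ℝ) * Real.log 2) := by
      have := mul_le_mul_of_nonneg_left hga h2pos.le
      have haa : (2:ℝ)^(n+1) * (a * (M * ((n:ℝ) * Real.log 2)))
          = M * ((n:ℝ) * Real.log 2) := by
        rw [ha]; field_simp
      linarith [this, haa]
    have hn1' : (1:ℝ) ≤ (n:ℝ) := by exact_mod_cast hn1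
    have hnpos : (0:ℝ) < (n:ℝ) + 1 := by linarith
    rw [ge_iff_le] at hga'
    have h5 : (1/((n:ℝ)+1)) * (M * ((n:ℝ) * Real.log 2)) ≤
        (1/((n:ℝ)+1)) * ((2:ℝ)^(n+1) * g a) := by
      apply mul_le_mul_of_nonneg_left hga' (by positivity)
    have h6 : M * Real.log 2 / 2 ≤ (1/((n:ℝ)+1)) * (M * ((n:ℝ) * Real.log 2)) := by
      rw [one_div, inv_mul_eq_div, div_le_div_iff₀ (by norm_num) hnpos]
      nlinarith [mul_nonneg (mul_pos hMpos hlog2).le (by linarith : (0:ℝ) ≤ (n:ℝ) - 1)]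
    linarith
  convert hfinal using 2
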